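/- Let 𝒫_c be a partition of {1,...,N} and 𝒫_f a refinement of 𝒫_c, and suppose 𝒫_f is regular-sparse with respect to A. Let (g_1^{(c)},...,g_K^{(c)}) be a set of intrinsic sparse modes of A with respect to 𝒫_c and (g_1^{(f)},...,g_K^{(f)}) a set of intrinsic sparse modes of A with respect to 𝒫_f. Then there is a bijection σ of {1,...,K} such that for every k: (i) {P ∈ 𝒫_c : g_{σ(k)}^{(f)}|_P ≠ 0} = {P ∈ 𝒫_c : g_k^{(c)}|_P ≠ 0}; (ii) {P ∈ 𝒫_f : g_{σ(k)}^{(f)}|_P ≠ 0} ⊆ {P ∈ 𝒫_f : g_k^{(c)}|_P ≠ 0}; and (iii) if g_k^{(c)} is identifiable on 𝒫_c from every other mode g_{k'}^{(c)}, k' ≠ k, then g_{σ(k)}^{(f)} = ± g_k^{(c)}. -/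

import Mathlib

open Matrix BigOperators

/-- Restriction of a vector `ψ ∈ ℝ^N` to the indices in a patch `Pm`. -/
def restrictPatch {N : ℕ} (Pm : Finset (Fin N)) (ψ : Fin N → ℝ) : ↥Pm → ℝ :=
  fun i => ψ i

/-- Patch-wise sparseness `s(ψ;𝒫)`: the number of patches on which `ψ` is nonzero. -/
noncomputable def sparseness {N M : ℕ} (P : Fin M → Finset (Fin N)) (ψ : Fin N → ℝ) : ℕ :=
  {m : Fin M | restrictPatch (P m) ψ ≠ 0}.ncard

/-- `P` is a partition of `{1,...,N}` into disjoint nonempty patches. -/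
def IsPartition {N M : ℕ} (P : Fin M → Finset (Fin N)) : Prop :=
  (∀ m, (P m).Nonempty) ∧ (∀ m m', m ≠ m' → Disjoint (P m) (P m')) ∧ (∀ i, ∃ m, i ∈ P m)

/-- `K_m`: the rank of the principal submatrix `A_mm`. -/
noncomputable def patchRank {N : ℕ} (A : Matrix (Fin N) (Fin N) ℝ) (Pm : Finset (Fin N)) : ℕ :=
  (A.submatrix (fun i : ↥Pm => (i : Fin N)) (fun i : ↥Pm => (i : Fin N))).rank

/-- The partition `P` is regular-sparse w.r.t. `A`. -/
def RegularSparse {N M : ℕ} (K : ℕ) (A : Matrix (Fin N) (Fin N) ℝ)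
    (P : Fin M → Finset (Fin N)) : Prop :=
  ∃ g : Fin K → Fin N → ℝ,
    A = ∑ k, vecMulVec (g k) (g k) ∧
    ∀ m, LinearIndependent ℝ
      (fun k : {k : Fin K // restrictPatch (P m) (g k) ≠ 0} =>
        restrictPatch (P m) (g (k : Fin K)))

/-- `(ψ_1,...,ψ_K)` is a set of intrinsic sparse modes of `A` w.r.t. the partition `P`. -/
def IsISM {N M K : ℕ} (A : Matrix (Fin N) (Fin N) ℝ) (P : Fin M → Finset (Fin N))
    (ψ : Fin K → Fin N → ℝ) : Prop :=
  A = ∑ k, vecMulVec (ψ k) (ψ k) ∧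
  ∀ φ : Fin K → Fin N → ℝ, A = ∑ k, vecMulVec (φ k) (φ k) →
    ∑ k, sparseness P (ψ k) ≤ ∑ k, sparseness P (φ k)

/-- Two modes are unidentifiable on partition `P`: supported on exactly the same patches. -/
def Unidentifiable {N M : ℕ} (P : Fin M → Finset (Fin N)) (g g' : Fin N → ℝ) : Prop :=
  ∀ m, restrictPatch (P m) g ≠ 0 ↔ restrictPatch (P m) g' ≠ 0

/-- The block diagonal matrix `H_ext = diag(H_1, ..., H_M)`. -/
def Hext {N M : ℕ} (P : Fin M → Finset (Fin N)) (Km : Fin M → ℕ)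
    (H : ∀ m, Matrix ↥(P m) (Fin (Km m)) ℝ) :
    Matrix (Fin N) ((m : Fin M) × Fin (Km m)) ℝ :=
  Matrix.of fun i c => if h : i ∈ P c.1 then H c.1 ⟨i, h⟩ c.2 else 0

/-- The `(m,n)` block `Λ_mn` of a matrix indexed by `Σ m, Fin (Km m)`. -/
def ΛBlock {M : ℕ} {Km : Fin M → ℕ}
    (Λ : Matrix ((m : Fin M) × Fin (Km m)) ((m : Fin M) × Fin (Km m)) ℝ) (m n : Fin M) :
    Matrix (Fin (Km m)) (Fin (Km n)) ℝ :=
  Matrix.of fun i j => Λ ⟨m, i⟩ ⟨n, j⟩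

/-- Joint diagonalization objective: sum of squares of off-diagonal entries of `Vᵀ S_n V`. -/
noncomputable def offDiagObj {n M : ℕ} (S : Fin M → Matrix (Fin n) (Fin n) ℝ)
    (V : Matrix (Fin n) (Fin n) ℝ) : ℝ :=
  ∑ p, ∑ i, ∑ j, if i ≠ j then ((Vᵀ * S p * V) i j) ^ 2 else 0

section AuxISMD

open Submodule

variable {N K : ℕ}

private lemma restrict_sum_smul (Pm : Finset (Fin N)) (c : Fin K → ℝ) (u : Fin K → Fin N → ℝ) :
    restrictPatch Pm (∑ j, c j • u j) = ∑ j, c j • restrictPatch Pm (u j) := by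
  funext i
  simp [restrictPatch, Finset.sum_apply]

/-- If the nonzero restrictions of `u` to a patch are linearly independent, then any
linear combination with a nonzero coefficient on an index with nonzero restriction has
nonzero restriction. -/
private lemma restrict_comb_ne_zero {Pm : Finset (Fin N)} {u : Fin K → Fin N → ℝ}
    (hLI : LinearIndependent ℝ (fun k : {k : Fin K // restrictPatch Pm (u k) ≠ 0} =>
      restrictPatch Pm (u (k : Fin K))))
    (c : Fin K → ℝ) {j0 : Fin K} (hc : c j0 ≠ 0) (hu : restrictPatch Pm (u j0) ≠ 0) :
    restrictPatch Pm (∑ j, c j • u j) ≠ 0 := by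
  classical
  intro hw
  rw [restrict_sum_smul] at hw
  have hsub : ∑ k : {k : Fin K // restrictPatch Pm (u k) ≠ 0},
      c (k : Fin K) • restrictPatch Pm (u (k : Fin K)) = 0 := by
    rw [← Finset.sum_subtype
      (Finset.univ.filter fun k => restrictPatch Pm (u k) ≠ 0)
      (by simp) (fun j => c j • restrictPatch Pm (u j))]
    rw [Finset.sum_filter_of_ne (fun x _ hx => by
      intro h
      apply hx
      rw [h, smul_zero])]
    exact hw
  have := Fintype.linearIndependent_iff.mp hLI (fun k => c (k : Fin K)) hsub ⟨j0, hu⟩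
  exact hc this

/-- Linear independence of nonzero restrictions on fine patches implies the same on
coarse patches. -/
private lemma coarse_LI_of_fine_LI {N K Mc Mf : ℕ} {Pc : Fin Mc → Finset (Fin N)}
    {Pf : Fin Mf → Finset (Fin N)} (hPc : IsPartition Pc) (hPf : IsPartition Pf)
    (hrefine : ∀ mf, ∃ mc, Pf mf ⊆ Pc mc) {u : Fin K → Fin N → ℝ}
    (hLI : ∀ mf, LinearIndependent ℝ (fun k : {k : Fin K // restrictPatch (Pf mf) (u k) ≠ 0} =>
      restrictPatch (Pf mf) (u (k : Fin K)))) (mc : Fin Mc) :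
    LinearIndependent ℝ (fun k : {k : Fin K // restrictPatch (Pc mc) (u k) ≠ 0} =>
      restrictPatch (Pc mc) (u (k : Fin K))) := by
  classical
  rw [Fintype.linearIndependent_iff]
  intro c hc k0
  by_contra hck0
  obtain ⟨i, hi⟩ : ∃ i : ↥(Pc mc), u (k0 : Fin K) (i : Fin N) ≠ 0 := by
    by_contra h
    push_neg at h
    exact k0.2 (funext fun i => h i)
  obtain ⟨mf, hmf⟩ := hPf.2.2 (i : Fin N)
  obtain ⟨mc', hsub⟩ := hrefine mf
  have hmc' : mc' = mc := by
    by_contra hne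
    exact Finset.disjoint_left.mp (hPc.2.1 mc' mc hne) (hsub hmf) i.2
  rw [hmc'] at hsub
  set d : Fin K → ℝ := fun j =>
    if h : restrictPatch (Pc mc) (u j) ≠ 0 then c ⟨j, h⟩ else 0 with hd
  have hk0f : restrictPatch (Pf mf) (u (k0 : Fin K)) ≠ 0 := by
    intro h
    exact hi (congrFun h ⟨(i : Fin N), hmf⟩)
  have hdk0 : d (k0 : Fin K) ≠ 0 := by
    rw [hd]
    simpa [k0.2] using hck0
  have h0 : restrictPatch (Pf mf) (∑ j, d j • u j) = 0 := by
    funext x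
    have hx : (x : Fin N) ∈ Pc mc := hsub x.2
    have hc' := congrFun hc ⟨(x : Fin N), hx⟩
    simp only [Finset.sum_apply, Pi.smul_apply, Pi.zero_apply, restrictPatch,
      smul_eq_mul] at hc' ⊢
    have hstep : ∑ j : Fin K, d j * u j (x : Fin N)
        = ∑ k : {k : Fin K // restrictPatch (Pc mc) (u k) ≠ 0},
            c k * u (k : Fin K) (x : Fin N) := by
      rw [← Finset.sum_filter_of_ne (p := fun j => restrictPatch (Pc mc) (u j) ≠ 0)
        (fun j _ hj => by
          intro h
          apply hj
          rw [hd]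
          simp [h])]
      rw [Finset.sum_subtype (p := fun j => restrictPatch (Pc mc) (u j) ≠ 0)
        (Finset.univ.filter fun j => restrictPatch (Pc mc) (u j) ≠ 0)
        (by simp) (fun j => d j * u j (x : Fin N))]
      apply Finset.sum_congr rfl
      intro k _
      congr 1
      rw [hd]
      simp [k.2]
    rw [hstep, hc']
  exact restrict_comb_ne_zero (hLI mf) d hdk0 hk0f h0
private lemma total_sparseness {N K M : ℕ} (P : Fin M → Finset (Fin N))
    (ψ : Fin K → Fin N → ℝ) :
    ∑ k, sparseness P (ψ k)
      = ∑ m, Nat.card {k : Fin K // restrictPatch (P m) (ψ k) ≠ 0} := by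
  classical
  have h1 : ∀ k, sparseness P (ψ k)
      = ∑ m, if restrictPatch (P m) (ψ k) ≠ 0 then 1 else 0 := by
    intro k
    rw [sparseness, Set.ncard_eq_toFinset_card', Set.toFinset_setOf, Finset.card_filter]
  have h2 : ∀ m, Nat.card {k : Fin K // restrictPatch (P m) (ψ k) ≠ 0}
      = ∑ k, if restrictPatch (P m) (ψ k) ≠ 0 then 1 else 0 := by
    intro m
    rw [Nat.card_eq_fintype_card, Fintype.card_subtype, Finset.card_filter]
  simp only [h1, h2]
  exact Finset.sum_comm

private lemma span_nonzero_restrict {N K : ℕ} (Pm : Finset (Fin N)) (φ : Fin K → Fin N → ℝ) :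
    Submodule.span ℝ (Set.range fun k : {k : Fin K // restrictPatch Pm (φ k) ≠ 0} =>
      restrictPatch Pm (φ (k : Fin K)))
      = Submodule.span ℝ (Set.range fun k => restrictPatch Pm (φ k)) := by
  apply le_antisymm
  · exact Submodule.span_mono (by rintro _ ⟨k, rfl⟩; exact ⟨k, rfl⟩)
  · rw [Submodule.span_le]
    rintro _ ⟨k, rfl⟩
    by_cases h : restrictPatch Pm (φ k) ≠ 0
    · exact Submodule.subset_span ⟨⟨k, h⟩, rfl⟩
    · push_neg at h
      show restrictPatch Pm (φ k) ∈ _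
      rw [h]
      exact Submodule.zero_mem _

private lemma patchRank_eq_finrank {N K : ℕ} (A : Matrix (Fin N) (Fin N) ℝ)
    (φ : Fin K → Fin N → ℝ) (hA : A = ∑ k, vecMulVec (φ k) (φ k)) (Pm : Finset (Fin N)) :
    patchRank A Pm = Module.finrank ℝ
      (Submodule.span ℝ (Set.range fun k => restrictPatch Pm (φ k))) := by
  classical
  set B : Matrix ↥Pm (Fin K) ℝ := Matrix.of fun i k => φ k (i : Fin N) with hB
  have hsub : A.submatrix (fun i : ↥Pm => (i : Fin N)) (fun i : ↥Pm => (i : Fin N))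
      = B * Bᵀ := by
    ext i j
    simp [hA, Matrix.sum_apply, Matrix.mul_apply, Matrix.vecMulVec_apply, hB]
  rw [patchRank, hsub, Matrix.rank_self_mul_transpose, Matrix.rank_eq_finrank_span_cols]
  rfl

/-- Every set of intrinsic sparse modes w.r.t. a regular-sparse partition has linearly
independent nonzero restrictions on every patch. -/
private lemma ism_li {N K M : ℕ} {A : Matrix (Fin N) (Fin N) ℝ} {P : Fin M → Finset (Fin N)}
    (hreg : RegularSparse K A P) {ψ : Fin K → Fin N → ℝ} (hψ : IsISM A P ψ) (m : Fin M) :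
    LinearIndependent ℝ (fun k : {k : Fin K // restrictPatch (P m) (ψ k) ≠ 0} =>
      restrictPatch (P m) (ψ (k : Fin K))) := by
  classical
  obtain ⟨g, hgA, hgLI⟩ := hreg
  have hrg : ∀ m', patchRank A (P m')
      = Nat.card {k : Fin K // restrictPatch (P m') (g k) ≠ 0} := by
    intro m'
    rw [patchRank_eq_finrank A g hgA, ← span_nonzero_restrict,
      finrank_span_eq_card (hgLI m'), Nat.card_eq_fintype_card]
  have hlow : ∀ m', patchRank A (P m')
      ≤ Nat.card {k : Fin K // restrictPatch (P m') (ψ k) ≠ 0} := by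
    intro m'
    rw [patchRank_eq_finrank A ψ hψ.1, ← span_nonzero_restrict, Nat.card_eq_fintype_card]
    have := finrank_span_le_card (R := ℝ)
      (Set.range fun k : {k : Fin K // restrictPatch (P m') (ψ k) ≠ 0} =>
        restrictPatch (P m') (ψ (k : Fin K)))
    refine le_trans this ?_
    rw [Set.toFinset_range]
    exact le_trans Finset.card_image_le (by simp)
  have htotg : ∑ k, sparseness P (g k) = ∑ m', patchRank A (P m') := by
    rw [total_sparseness]
    exact Finset.sum_congr rfl fun m' _ => (hrg m').symm
  have hmin : ∑ k, sparseness P (ψ k) ≤ ∑ k, sparseness P (g k) := hψ.2 g hgA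
  rw [total_sparseness, htotg] at hmin
  have heq : ∀ m' ∈ Finset.univ, patchRank A (P m')
      = Nat.card {k : Fin K // restrictPatch (P m') (ψ k) ≠ 0} := by
    refine (Finset.sum_eq_sum_iff_of_le fun m' _ => hlow m').mp ?_
    exact le_antisymm (Finset.sum_le_sum fun m' _ => hlow m') hmin
  have hcard : Fintype.card {k : Fin K // restrictPatch (P m) (ψ k) ≠ 0}
      = Module.finrank ℝ (Submodule.span ℝ
        (Set.range fun k : {k : Fin K // restrictPatch (P m) (ψ k) ≠ 0} =>
          restrictPatch (P m) (ψ (k : Fin K)))) := by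
    rw [span_nonzero_restrict, ← patchRank_eq_finrank A ψ hψ.1, heq m (Finset.mem_univ m),
      Nat.card_eq_fintype_card]
  exact linearIndependent_iff_card_eq_finrank_span.mpr hcard
private lemma mulVec_inj_cancel {N K : ℕ} {L : Type*} [Fintype L] [DecidableEq L]
    {G : Matrix (Fin N) (Fin K) ℝ} (hinj : Function.Injective G.mulVec)
    {M M' : Matrix (Fin K) L ℝ} (h : G * M = G * M') : M = M' := by
  have hv : ∀ v, M.mulVec v = M'.mulVec v := by
    intro v
    apply hinj
    rw [Matrix.mulVec_mulVec, Matrix.mulVec_mulVec, h]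
  ext i j
  have h2 := hv (Pi.single j 1)
  rw [Matrix.mulVec_single_one, Matrix.mulVec_single_one] at h2
  exact congrFun h2 i
end AuxISMD

/-- Theorem 3.2 of the paper, consistency of the ISMD. Let `𝒫_f` be a
refinement of `𝒫_c` which is regular-sparse w.r.t. `A`, and let `g^{(c)}`, `g^{(f)}` be
intrinsic sparse modes of `A` w.r.t. `𝒫_c` and `𝒫_f` respectively. Then, after matching the
modes by a bijection `σ`: (i) `g^{(f)}_{σ(k)}` and `g^{(c)}_k` are supported on the same
coarse patches; (ii) the fine support patches of `g^{(f)}_{σ(k)}` are contained in those of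
`g^{(c)}_k`; (iii) if `g^{(c)}_k` is identifiable on `𝒫_c` from every other coarse mode,
then `g^{(f)}_{σ(k)} = ± g^{(c)}_k`. -/
theorem ismd_consistency_under_refinement
    {N Mc Mf K : ℕ} (A : Matrix (Fin N) (Fin N) ℝ)
    (hA : A.PosSemidef) (hrank : A.rank = K)
    (Pc : Fin Mc → Finset (Fin N)) (hPc : IsPartition Pc)
    (Pf : Fin Mf → Finset (Fin N)) (hPf : IsPartition Pf)
    (hrefine : ∀ mf, ∃ mc, Pf mf ⊆ Pc mc)
    (hreg : RegularSparse K A Pf)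
    (gc : Fin K → Fin N → ℝ) (hgc : IsISM A Pc gc)
    (gf : Fin K → Fin N → ℝ) (hgf : IsISM A Pf gf) :
    ∃ σ : Equiv.Perm (Fin K), ∀ k : Fin K,
      (∀ mc, restrictPatch (Pc mc) (gf (σ k)) ≠ 0 ↔ restrictPatch (Pc mc) (gc k) ≠ 0) ∧
      (∀ mf, restrictPatch (Pf mf) (gf (σ k)) ≠ 0 → restrictPatch (Pf mf) (gc k) ≠ 0) ∧
      ((∀ k', k' ≠ k → ¬ Unidentifiable Pc (gc k) (gc k')) →
        gf (σ k) = gc k ∨ gf (σ k) = fun i => -(gc k i)) := by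
  classical
  set Gc : Matrix (Fin N) (Fin K) ℝ := Matrix.of fun i k => gc k i with hGcdef
  set Gf : Matrix (Fin N) (Fin K) ℝ := Matrix.of fun i k => gf k i with hGfdef
  have hAc : A = Gc * Gcᵀ := by
    rw [hgc.1]
    ext i j
    simp [Matrix.sum_apply, Matrix.mul_apply, Matrix.vecMulVec_apply, hGcdef]
  have hAf : A = Gf * Gfᵀ := by
    rw [hgf.1]
    ext i j
    simp [Matrix.sum_apply, Matrix.mul_apply, Matrix.vecMulVec_apply, hGfdef]
  have hrGc : Gc.rank = K := by rw [← Matrix.rank_self_mul_transpose, ← hAc, hrank]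
  have hrGf : Gf.rank = K := by rw [← Matrix.rank_self_mul_transpose, ← hAf, hrank]
  -- the columns of `Gc` are linearly independent
  have hLIgc : LinearIndependent ℝ gc := by
    refine linearIndependent_iff_card_eq_finrank_span.mpr ?_
    have h1 := Matrix.rank_eq_finrank_span_cols Gc
    rw [hrGc] at h1
    have h2 : Set.range Gc.col = Set.range gc := rfl
    rw [h2] at h1
    rw [Set.finrank, ← h1, Fintype.card_fin]
  have hinj : Function.Injective Gc.mulVec := by
    rw [Matrix.mulVec_injective_iff]
    exact hLIgc
  -- column-space comparisons
  have hrangeCA : LinearMap.range A.mulVecLin ≤ LinearMap.range Gc.mulVecLin := by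
    rintro _ ⟨v, rfl⟩
    exact ⟨Gcᵀ.mulVec v, by
      rw [Matrix.mulVecLin_apply, Matrix.mulVecLin_apply, Matrix.mulVec_mulVec, ← hAc]⟩
  have hrangeAF : LinearMap.range A.mulVecLin ≤ LinearMap.range Gf.mulVecLin := by
    rintro _ ⟨v, rfl⟩
    exact ⟨Gfᵀ.mulVec v, by
      rw [Matrix.mulVecLin_apply, Matrix.mulVecLin_apply, Matrix.mulVec_mulVec, ← hAf]⟩
  have hrangeFA : LinearMap.range Gf.mulVecLin = LinearMap.range A.mulVecLin := by
    refine (Submodule.eq_of_le_of_finrank_le hrangeAF ?_).symm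
    have h1 : Module.finrank ℝ (LinearMap.range Gf.mulVecLin) = Gf.rank := rfl
    have h2 : Module.finrank ℝ (LinearMap.range A.mulVecLin) = A.rank := rfl
    rw [h1, h2, hrGf, hrank]
  -- coefficient matrix T
  have hmem : ∀ k, ∃ t, Gc.mulVec t = gf k := by
    intro k
    have h1 : gf k ∈ LinearMap.range Gf.mulVecLin :=
      ⟨Pi.single k 1, by rw [Matrix.mulVecLin_apply, Matrix.mulVec_single_one]; rfl⟩
    obtain ⟨t, ht⟩ := hrangeCA (hrangeFA ▸ h1)
    exact ⟨t, ht⟩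
  choose t ht using hmem
  set T : Matrix (Fin K) (Fin K) ℝ := Matrix.of fun j k => t k j with hTdef
  have hGfT : Gf = Gc * T := by
    ext i k
    have h1 := congrFun (ht k) i
    rw [Matrix.mul_apply]
    simp only [Matrix.mulVec, dotProduct] at h1
    exact h1.symm
  have hTT : T * Tᵀ = 1 := by
    have hEq : Gc * (Gcᵀ) = Gc * ((T * Tᵀ) * Gcᵀ) := by
      calc Gc * Gcᵀ = A := hAc.symm
        _ = Gf * Gfᵀ := hAf
        _ = (Gc * T) * (Tᵀ * Gcᵀ) := by rw [hGfT, Matrix.transpose_mul]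
        _ = Gc * ((T * Tᵀ) * Gcᵀ) := by
            simp only [Matrix.mul_assoc]
    have h1 : Gcᵀ = (T * Tᵀ) * Gcᵀ := mulVec_inj_cancel hinj hEq
    have h2 : Gc = Gc * (T * Tᵀ) := by
      have := congrArg Matrix.transpose h1
      rw [Matrix.transpose_mul, Matrix.transpose_mul, Matrix.transpose_transpose,
        Matrix.transpose_transpose] at this
      exact this
    have h3 : Gc * (1 : Matrix (Fin K) (Fin K) ℝ) = Gc * (T * Tᵀ) := by
      rw [Matrix.mul_one]
      exact h2
    exact (mulVec_inj_cancel hinj h3).symm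
  have hTsT : Tᵀ * T = 1 := mul_eq_one_comm.mp hTT
  have hGcT : Gc = Gf * Tᵀ := by rw [hGfT, Matrix.mul_assoc, hTT, Matrix.mul_one]
  -- functional expansions
  have hgf_exp : ∀ k, gf k = ∑ j, T j k • gc j := by
    intro k
    funext i
    have h1 := congrFun (congrFun hGfT i) k
    rw [Matrix.mul_apply] at h1
    rw [Finset.sum_apply]
    rw [show gf k i = Gf i k from rfl, h1]
    exact Finset.sum_congr rfl fun j _ => mul_comm (Gc i j) (T j k)
  have hgc_exp : ∀ j, gc j = ∑ k', T j k' • gf k' := by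
    intro j
    funext i
    have h1 := congrFun (congrFun hGcT i) j
    rw [Matrix.mul_apply] at h1
    rw [Finset.sum_apply]
    rw [show gc j i = Gc i j from rfl, h1]
    refine Finset.sum_congr rfl fun k' _ => ?_
    show Gf i k' * Tᵀ k' j = T j k' • gf k' i
    rw [Matrix.transpose_apply]
    exact mul_comm (Gf i k') (T j k')
  -- determinant and permutation
  have hdet : T.det ≠ 0 := by
    have h1 : T.det * Tᵀ.det = 1 := by rw [← Matrix.det_mul, hTT, Matrix.det_one]
    intro h
    rw [h, zero_mul] at h1
    exact zero_ne_one h1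
  obtain ⟨τ, hτ⟩ : ∃ τ : Equiv.Perm (Fin K), ∀ i, T (τ i) i ≠ 0 := by
    by_contra hcon
    push_neg at hcon
    apply hdet
    rw [Matrix.det_apply]
    refine Finset.sum_eq_zero fun σ _ => ?_
    obtain ⟨i, hi⟩ := hcon σ
    have hzero : ∏ i', T (σ i') i' = 0 := Finset.prod_eq_zero (Finset.mem_univ i) hi
    rw [hzero, smul_zero]
  have hTk : ∀ k, T k (τ⁻¹ k) ≠ 0 := by
    intro k
    have := hτ (τ⁻¹ k)
    rwa [← Equiv.Perm.mul_apply, mul_inv_cancel, Equiv.Perm.one_apply] at this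
  -- linear independence of restrictions
  have hregC : RegularSparse K A Pc := by
    obtain ⟨g, hgA, hgLI⟩ := hreg
    exact ⟨g, hgA, fun mc => coarse_LI_of_fine_LI hPc hPf hrefine hgLI mc⟩
  have LIc := fun mc => ism_li hregC hgc mc
  have LIf := fun mf => ism_li hreg hgf mf
  have LIfc := fun mc => coarse_LI_of_fine_LI hPc hPf hrefine LIf mc
  -- support transfer
  have supp_eq : ∀ (j k' : Fin K), T j k' ≠ 0 → ∀ mc,
      (restrictPatch (Pc mc) (gf k') ≠ 0 ↔ restrictPatch (Pc mc) (gc j) ≠ 0) := by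
    intro j k' hT0 mc
    constructor
    · intro h
      rw [hgc_exp j]
      exact restrict_comb_ne_zero (LIfc mc) _ hT0 h
    · intro h
      rw [hgf_exp k']
      exact restrict_comb_ne_zero (LIc mc) _ hT0 h
  refine ⟨τ⁻¹, fun k => ⟨supp_eq k (τ⁻¹ k) (hTk k), fun mf h => ?_, fun hid => ?_⟩⟩
  · rw [hgc_exp k]
    exact restrict_comb_ne_zero (LIf mf) _ (hTk k) h
  · have hz : ∀ j, j ≠ k → T j (τ⁻¹ k) = 0 := by
      intro j hj
      by_contra hTj
      refine hid j hj fun mc => ?_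
      exact ((supp_eq k (τ⁻¹ k) (hTk k) mc).symm.trans (supp_eq j (τ⁻¹ k) hTj mc))
    have hone : T k (τ⁻¹ k) * T k (τ⁻¹ k) = 1 := by
      have h1 := congrFun (congrFun hTsT (τ⁻¹ k)) (τ⁻¹ k)
      rw [Matrix.mul_apply, Matrix.one_apply_eq] at h1
      rw [← h1]
      rw [Finset.sum_eq_single k]
      · rfl
      · intro j _ hj
        rw [Matrix.transpose_apply, hz j hj, mul_zero]
      · intro h
        exact absurd (Finset.mem_univ k) h
    have hsum : ∑ j, T j (τ⁻¹ k) • gc j = T k (τ⁻¹ k) • gc k := by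
      refine Finset.sum_eq_single k (fun j _ hj => by rw [hz j hj, zero_smul]) ?_
      intro h
      exact absurd (Finset.mem_univ k) h
    rcases mul_self_eq_one_iff.mp hone with h1 | h1
    · left
      rw [hgf_exp (τ⁻¹ k), hsum, h1, one_smul]
    · right
      rw [hgf_exp (τ⁻¹ k), hsum, h1]
      funext i
      simp
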